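/- Let Ω ⊆ ℝⁿ be a bounded measurable set, u₁, …, u_k ∈ L²(Ω) orthonormal, and set h(ξ) = Σ_{j=1}^k |û_j(ξ)|². Then |∇h(ξ)| ≤ 2(2π)^(−n)·√(vol(Ω)·I(Ω)) for all ξ, where I(Ω) = min_{a ∈ ℝⁿ} ∫_Ω |x − a|² dx is the moment of inertia of Ω. -/

import Mathlib

open MeasureTheory

lemma aux_exp_lip (s t : ℝ) :
    ‖Complex.exp (Complex.I * s) - Complex.exp (Complex.I * t)‖ ≤ |s - t| := by
  have hd : ∀ r : ℝ, HasDerivAt (fun r : ℝ => Complex.exp (Complex.I * r))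
      (Complex.exp (Complex.I * r) * Complex.I) r := by
    intro r
    have h1 : HasDerivAt (fun r : ℝ => (r : ℂ)) 1 r := Complex.ofRealCLM.hasDerivAt
    simpa using (h1.const_mul Complex.I).cexp
  have := convex_univ.norm_image_sub_le_of_norm_hasDerivWithin_le
    (f := fun r : ℝ => Complex.exp (Complex.I * r))
    (f' := fun r => Complex.exp (Complex.I * r) * Complex.I) (C := 1)
    (fun x _ => (hd x).hasDerivWithinAt) (fun x _ => by simp [Complex.norm_exp])
    (Set.mem_univ t) (Set.mem_univ s)
  simpa [Real.norm_eq_abs] using this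

lemma aux_bessel {α : Type*} [MeasurableSpace α] (μ : Measure α) [IsFiniteMeasure μ] {k : ℕ}
    (u : Fin k → α → ℂ) (hmem : ∀ j, MemLp (u j) 2 μ)
    (horth : ∀ i j, ∫ x, (starRingEnd ℂ) (u i x) * u j x ∂μ = if i = j then 1 else 0)
    (g : α → ℂ) (hg : MemLp g 2 μ) :
    ∑ j : Fin k, ‖∫ x, (starRingEnd ℂ) (u j x) * g x ∂μ‖ ^ 2 ≤ ∫ x, ‖g x‖ ^ 2 ∂μ := by
  classical
  have hinner : ∀ (f₁ f₂ : α → ℂ) (h₁ : MemLp f₁ 2 μ) (h₂ : MemLp f₂ 2 μ),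
      (inner ℂ (h₁.toLp f₁) (h₂.toLp f₂) : ℂ) = ∫ x, (starRingEnd ℂ) (f₁ x) * f₂ x ∂μ := by
    intro f₁ f₂ h₁ h₂
    rw [MeasureTheory.L2.inner_def]
    apply integral_congr_ae
    filter_upwards [h₁.coeFn_toLp, h₂.coeFn_toLp] with x hx1 hx2
    rw [hx1, hx2]
    simp [mul_comm]
  set U : Fin k → Lp ℂ 2 μ := fun j => (hmem j).toLp (u j) with hU
  set G : Lp ℂ 2 μ := hg.toLp g with hG
  have hON : Orthonormal ℂ U := by
    rw [orthonormal_iff_ite]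
    intro i j
    rw [hU, hinner _ _ _ _, horth i j]
  have hb : ∑ j : Fin k, ‖(inner ℂ (U j) G : ℂ)‖ ^ 2 ≤ ‖G‖ ^ 2 :=
    hON.sum_inner_products_le (s := Finset.univ) G
  have hGn : ‖G‖ ^ 2 = ∫ x, ‖g x‖ ^ 2 ∂μ := by
    have h1 : (inner ℂ G G : ℂ) = ((∫ x, ‖g x‖ ^ 2 ∂μ : ℝ) : ℂ) := by
      rw [hG, hinner g g hg hg]
      have he : ∫ x, (starRingEnd ℂ) (g x) * g x ∂μ = ∫ x, ((‖g x‖ ^ 2 : ℝ) : ℂ) ∂μ := by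
        apply integral_congr_ae
        filter_upwards with x
        rw [← Complex.normSq_eq_conj_mul_self]
        norm_cast
        simp [Complex.normSq_eq_norm_sq]
      rw [he]
      exact integral_ofReal
    have h2 : (inner ℂ G G : ℂ) = ((‖G‖ : ℂ)) ^ 2 := inner_self_eq_norm_sq_to_K G
    rw [h2] at h1
    exact_mod_cast h1
  calc ∑ j : Fin k, ‖∫ x, (starRingEnd ℂ) (u j x) * g x ∂μ‖ ^ 2
      = ∑ j : Fin k, ‖(inner ℂ (U j) G : ℂ)‖ ^ 2 := by
        refine Finset.sum_congr rfl fun j _ => ?_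
        rw [hU, hG, hinner _ _ _ _]
    _ ≤ ‖G‖ ^ 2 := hb
    _ = ∫ x, ‖g x‖ ^ 2 ∂μ := hGn

lemma aux_key {n k : ℕ} (Ω : Set (EuclideanSpace ℝ (Fin n)))
    (hΩb : Bornology.IsBounded Ω) (hΩm : MeasurableSet Ω)
    (u : Fin k → EuclideanSpace ℝ (Fin n) → ℂ)
    (hint : ∀ j, IntegrableOn (u j) Ω)
    (horth : ∀ i j, ∫ x in Ω, (starRingEnd ℂ) (u i x) * u j x = if i = j then 1 else 0)
    (a ξ η : EuclideanSpace ℝ (Fin n)) :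
    |(∑ j : Fin k, ‖∫ x in Ω, u j x * Complex.exp (Complex.I * ((inner ℝ x ξ : ℝ) : ℂ))‖ ^ 2) -
      ∑ j : Fin k, ‖∫ x in Ω, u j x * Complex.exp (Complex.I * ((inner ℝ x η : ℝ) : ℂ))‖ ^ 2|
      ≤ 2 * Real.sqrt ((volume Ω).toReal * ∫ x in Ω, ‖x - a‖ ^ 2) * ‖ξ - η‖ := by
  classical
  haveI hfin : IsFiniteMeasure (volume.restrict Ω) :=
    ⟨by rw [Measure.restrict_apply_univ]; exact hΩb.measure_lt_top⟩
  obtain ⟨R, hR⟩ := isBounded_iff_forall_norm_le.1 hΩb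
  set V : ℝ := (volume Ω).toReal with hV
  have hVnn : 0 ≤ V := ENNReal.toReal_nonneg
  set Ia : ℝ := ∫ x in Ω, ‖x - a‖ ^ 2 with hIa
  have hIann : 0 ≤ Ia := integral_nonneg fun x => sq_nonneg _
  -- L² membership of the u j
  have hmem : ∀ j, MemLp (u j) 2 (volume.restrict Ω) := by
    intro j
    have h1 := horth j j
    simp only [if_pos rfl] at h1
    have hi : Integrable (fun x => (starRingEnd ℂ) (u j x) * u j x) (volume.restrict Ω) := by
      by_contra hc
      rw [integral_undef hc] at h1
      exact zero_ne_one h1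
    have hi2 : Integrable (fun x => ‖u j x‖ ^ 2) (volume.restrict Ω) := by
      refine hi.re.congr (Filter.Eventually.of_forall fun x => ?_)
      show RCLike.re ((starRingEnd ℂ) (u j x) * u j x) = ‖u j x‖ ^ 2
      rw [RCLike.re_to_complex, ← Complex.normSq_eq_conj_mul_self, Complex.ofReal_re,
        Complex.normSq_eq_norm_sq]
    exact (memLp_two_iff_integrable_sq_norm (hint j).aestronglyMeasurable).2 hi2
  -- the modulated exponentials
  set E1 : EuclideanSpace ℝ (Fin n) → EuclideanSpace ℝ (Fin n) → ℂ :=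
    fun ζ x => Complex.exp (Complex.I * ((inner ℝ (x - a) ζ : ℝ) : ℂ)) with hE1
  have hEcont : ∀ ζ, Continuous (E1 ζ) := by
    intro ζ
    exact Complex.continuous_exp.comp (continuous_const.mul
      (Complex.continuous_ofReal.comp ((continuous_id.sub continuous_const).inner
        continuous_const)))
  have hEnorm : ∀ ζ x, ‖E1 ζ x‖ = 1 := by
    intro ζ x
    show ‖Complex.exp (Complex.I * ((inner ℝ (x - a) ζ : ℝ) : ℂ))‖ = 1
    rw [Complex.norm_exp, Complex.mul_re]
    simp [Complex.I_re, Complex.I_im]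
  -- generic Bessel bound
  have hmemC : ∀ (f : EuclideanSpace ℝ (Fin n) → ℂ), Continuous f → ∀ C : ℝ,
      (∀ x, ‖f x‖ ≤ C) → MemLp f 2 (volume.restrict Ω) := fun f hf C hC =>
    MemLp.of_bound hf.aestronglyMeasurable C (Filter.Eventually.of_forall hC)
  have hbessel : ∀ (e : EuclideanSpace ℝ (Fin n) → ℂ), Continuous e → ∀ C : ℝ,
      (∀ x, ‖e x‖ ≤ C) →
      ∑ j : Fin k, ‖∫ x in Ω, u j x * e x‖ ^ 2 ≤ ∫ x in Ω, ‖e x‖ ^ 2 := by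
    intro e he C hC
    have hec : Continuous fun x => (starRingEnd ℂ) (e x) := by
      simp only [starRingEnd_apply]
      exact he.star
    have hgm : MemLp (fun x => (starRingEnd ℂ) (e x)) 2 (volume.restrict Ω) :=
      hmemC _ hec C (fun x => by rw [RCLike.norm_conj]; exact hC x)
    have h := aux_bessel (volume.restrict Ω) u hmem horth _ hgm
    have hL : ∀ j : Fin k, ‖∫ x in Ω, (starRingEnd ℂ) (u j x) * (starRingEnd ℂ) (e x)‖
        = ‖∫ x in Ω, u j x * e x‖ := by
      intro j
      have : ∫ x in Ω, (starRingEnd ℂ) (u j x) * (starRingEnd ℂ) (e x)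
          = (starRingEnd ℂ) (∫ x in Ω, u j x * e x) := by
        rw [← integral_conj]
        exact integral_congr_ae (Filter.Eventually.of_forall fun x => (map_mul _ _ _).symm)
      rw [this, RCLike.norm_conj]
    have hRr : ∫ x in Ω, ‖(starRingEnd ℂ) (e x)‖ ^ 2 = ∫ x in Ω, ‖e x‖ ^ 2 := by
      refine integral_congr_ae (Filter.Eventually.of_forall fun x => ?_)
      simp [RCLike.norm_conj]
    calc ∑ j : Fin k, ‖∫ x in Ω, u j x * e x‖ ^ 2
        = ∑ j : Fin k, ‖∫ x in Ω, (starRingEnd ℂ) (u j x) * (starRingEnd ℂ) (e x)‖ ^ 2 := by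
          exact Finset.sum_congr rfl fun j _ => by rw [hL j]
      _ ≤ ∫ x in Ω, ‖(starRingEnd ℂ) (e x)‖ ^ 2 := h
      _ = ∫ x in Ω, ‖e x‖ ^ 2 := hRr
  -- phase invariance
  have hFG : ∀ (j : Fin k) ζ,
      ‖∫ x in Ω, u j x * Complex.exp (Complex.I * ((inner ℝ x ζ : ℝ) : ℂ))‖
        = ‖∫ x in Ω, u j x * E1 ζ x‖ := by
    intro j ζ
    have hsplit : ∀ x : EuclideanSpace ℝ (Fin n),
        u j x * Complex.exp (Complex.I * ((inner ℝ x ζ : ℝ) : ℂ))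
          = Complex.exp (Complex.I * ((inner ℝ a ζ : ℝ) : ℂ)) * (u j x * E1 ζ x) := by
      intro x
      have hsub : (inner ℝ (x - a) ζ : ℝ) = (inner ℝ x ζ : ℝ) - (inner ℝ a ζ : ℝ) :=
        inner_sub_left x a ζ
      show u j x * Complex.exp (Complex.I * ((inner ℝ x ζ : ℝ) : ℂ))
          = Complex.exp (Complex.I * ((inner ℝ a ζ : ℝ) : ℂ)) *
            (u j x * Complex.exp (Complex.I * ((inner ℝ (x - a) ζ : ℝ) : ℂ)))
      rw [hsub]
      rw [show Complex.I * (((inner ℝ x ζ : ℝ) - (inner ℝ a ζ : ℝ) : ℝ) : ℂ)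
          = Complex.I * ((inner ℝ x ζ : ℝ) : ℂ) - Complex.I * ((inner ℝ a ζ : ℝ) : ℂ) by
        push_cast; ring]
      rw [Complex.exp_sub]
      field_simp
    rw [integral_congr_ae (Filter.Eventually.of_forall hsplit), integral_const_mul,
      norm_mul, Complex.norm_exp, Complex.mul_re]
    simp [Complex.I_re, Complex.I_im]
  -- integrability of the products
  have hInt : ∀ (j : Fin k) ζ, Integrable (fun x => u j x * E1 ζ x) (volume.restrict Ω) := by
    intro j ζ
    have := (hint j).bdd_mul (c := 1) (hEcont ζ).aestronglyMeasurable (Filter.Eventually.of_forall fun x => le_of_eq (hEnorm ζ x))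
    exact this.congr (Filter.Eventually.of_forall fun x => mul_comm _ _)
  set S1 : Fin k → ℝ := fun j => ‖∫ x in Ω, u j x * E1 ξ x‖ with hS1
  set S2 : Fin k → ℝ := fun j => ‖∫ x in Ω, u j x * E1 η x‖ with hS2
  set D : Fin k → ℝ := fun j => ‖∫ x in Ω, u j x * (E1 ξ x - E1 η x)‖ with hD
  have hS1nn : ∀ j, 0 ≤ S1 j := fun j => norm_nonneg _
  have hS2nn : ∀ j, 0 ≤ S2 j := fun j => norm_nonneg _
  have hDnn : ∀ j, 0 ≤ D j := fun j => norm_nonneg _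
  -- Bessel bounds
  have hA : ∀ ζ, ∑ j : Fin k, ‖∫ x in Ω, u j x * E1 ζ x‖ ^ 2 ≤ V := by
    intro ζ
    have h := hbessel (E1 ζ) (hEcont ζ) 1 (fun x => le_of_eq (hEnorm ζ x))
    have h2 : ∫ x in Ω, ‖E1 ζ x‖ ^ 2 = V := by
      have h3 : ∀ x, ‖E1 ζ x‖ ^ 2 = (1 : ℝ) := fun x => by rw [hEnorm ζ x]; norm_num
      simp only [h3]
      rw [setIntegral_const, smul_eq_mul, mul_one]; rfl
    rw [h2] at h
    exact h
  have hIg : Integrable (fun x => ‖x - a‖ ^ 2) (volume.restrict Ω) := by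
    rw [← memLp_one_iff_integrable]
    refine MemLp.of_bound ?_ ((R + ‖a‖) ^ 2) ?_
    · exact ((continuous_id.sub continuous_const).norm.pow 2).aestronglyMeasurable
    · rw [ae_restrict_iff' hΩm]
      refine Filter.Eventually.of_forall fun x hx => ?_
      have h1 : ‖x - a‖ ≤ R + ‖a‖ := by
        calc ‖x - a‖ ≤ ‖x‖ + ‖a‖ := norm_sub_le x a
          _ ≤ R + ‖a‖ := by linarith [hR x hx]
      have h0 : (0:ℝ) ≤ ‖x - a‖ := norm_nonneg _
      rw [Real.norm_eq_abs, abs_of_nonneg (sq_nonneg _)]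
      exact pow_le_pow_left₀ h0 h1 2
  have hD2 : ∑ j : Fin k, D j ^ 2 ≤ ‖ξ - η‖ ^ 2 * Ia := by
    have h := hbessel (fun x => E1 ξ x - E1 η x)
      ((hEcont ξ).sub (hEcont η)) 2
      (fun x => by
        calc ‖E1 ξ x - E1 η x‖ ≤ ‖E1 ξ x‖ + ‖E1 η x‖ := norm_sub_le _ _
          _ = 2 := by rw [hEnorm, hEnorm]; norm_num)
    have hmono : ∫ x in Ω, ‖E1 ξ x - E1 η x‖ ^ 2 ≤ ∫ x in Ω, ‖ξ - η‖ ^ 2 * ‖x - a‖ ^ 2 := by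
      refine integral_mono_of_nonneg (Filter.Eventually.of_forall fun x => sq_nonneg _)
        (hIg.const_mul _) (Filter.Eventually.of_forall fun x => ?_)
      have hlip : ‖E1 ξ x - E1 η x‖ ≤ |(inner ℝ (x - a) ξ : ℝ) - (inner ℝ (x - a) η : ℝ)| :=
        aux_exp_lip _ _
      have hinner : |(inner ℝ (x - a) ξ : ℝ) - (inner ℝ (x - a) η : ℝ)| ≤ ‖x - a‖ * ‖ξ - η‖ := by
        rw [← inner_sub_right]
        exact abs_real_inner_le_norm _ _
      have h2 : ‖E1 ξ x - E1 η x‖ ≤ ‖x - a‖ * ‖ξ - η‖ := hlip.trans hinner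
      calc ‖E1 ξ x - E1 η x‖ ^ 2 ≤ (‖x - a‖ * ‖ξ - η‖) ^ 2 := by
            exact pow_le_pow_left₀ (norm_nonneg _) h2 2
        _ = ‖ξ - η‖ ^ 2 * ‖x - a‖ ^ 2 := by ring
    have hpull : ∫ x in Ω, ‖ξ - η‖ ^ 2 * ‖x - a‖ ^ 2 = ‖ξ - η‖ ^ 2 * Ia := by
      rw [hIa, integral_const_mul]
    calc ∑ j : Fin k, D j ^ 2 ≤ ∫ x in Ω, ‖E1 ξ x - E1 η x‖ ^ 2 := h
      _ ≤ ∫ x in Ω, ‖ξ - η‖ ^ 2 * ‖x - a‖ ^ 2 := hmono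
      _ = ‖ξ - η‖ ^ 2 * Ia := hpull
  -- difference of the integrals
  have hdiff : ∀ j : Fin k, |S1 j - S2 j| ≤ D j := by
    intro j
    have h1 : |S1 j - S2 j| ≤ ‖(∫ x in Ω, u j x * E1 ξ x) - ∫ x in Ω, u j x * E1 η x‖ :=
      abs_norm_sub_norm_le _ _
    have h2 : (∫ x in Ω, u j x * E1 ξ x) - ∫ x in Ω, u j x * E1 η x
        = ∫ x in Ω, u j x * (E1 ξ x - E1 η x) := by
      rw [← integral_sub (hInt j ξ) (hInt j η)]
      exact integral_congr_ae (Filter.Eventually.of_forall fun x => (mul_sub _ _ _).symm)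
    rw [h2] at h1
    exact h1
  -- main chain
  have step1 : |(∑ j : Fin k, S1 j ^ 2) - ∑ j : Fin k, S2 j ^ 2|
      ≤ ∑ j : Fin k, (S1 j + S2 j) * D j := by
    rw [← Finset.sum_sub_distrib]
    refine (Finset.abs_sum_le_sum_abs _ _).trans (Finset.sum_le_sum fun j _ => ?_)
    have : S1 j ^ 2 - S2 j ^ 2 = (S1 j + S2 j) * (S1 j - S2 j) := by ring
    rw [this, abs_mul, abs_of_nonneg (by positivity)]
    exact mul_le_mul_of_nonneg_left (hdiff j) (by positivity)
  have step2 : ∑ j : Fin k, (S1 j + S2 j) * D j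
      ≤ Real.sqrt (∑ j : Fin k, (S1 j + S2 j) ^ 2) * Real.sqrt (∑ j : Fin k, D j ^ 2) := by
    have hcs := Finset.sum_mul_sq_le_sq_mul_sq Finset.univ (fun j => S1 j + S2 j) D
    have h1 : (0:ℝ) ≤ ∑ j : Fin k, (S1 j + S2 j) * D j :=
      Finset.sum_nonneg fun j _ => mul_nonneg (by positivity) (hDnn j)
    calc ∑ j : Fin k, (S1 j + S2 j) * D j
        = Real.sqrt ((∑ j : Fin k, (S1 j + S2 j) * D j) ^ 2) := (Real.sqrt_sq h1).symm
      _ ≤ Real.sqrt ((∑ j : Fin k, (S1 j + S2 j) ^ 2) * ∑ j : Fin k, D j ^ 2) :=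
          Real.sqrt_le_sqrt hcs
      _ = Real.sqrt (∑ j : Fin k, (S1 j + S2 j) ^ 2) * Real.sqrt (∑ j : Fin k, D j ^ 2) :=
          Real.sqrt_mul (Finset.sum_nonneg fun j _ => sq_nonneg _) _
  have step3 : ∑ j : Fin k, (S1 j + S2 j) ^ 2 ≤ 4 * V := by
    have h1 : ∑ j : Fin k, (S1 j + S2 j) ^ 2 ≤ ∑ j : Fin k, (2 * S1 j ^ 2 + 2 * S2 j ^ 2) :=
      Finset.sum_le_sum fun j _ => by nlinarith [sq_nonneg (S1 j - S2 j)]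
    rw [Finset.sum_add_distrib, ← Finset.mul_sum, ← Finset.mul_sum] at h1
    have hA1 : ∑ j : Fin k, S1 j ^ 2 ≤ V := hA ξ
    have hA2 : ∑ j : Fin k, S2 j ^ 2 ≤ V := hA η
    linarith
  have step4 : ∑ j : Fin k, D j ^ 2 ≤ ‖ξ - η‖ ^ 2 * Ia := hD2
  have hsq1 : Real.sqrt (∑ j : Fin k, (S1 j + S2 j) ^ 2) ≤ 2 * Real.sqrt V := by
    have := Real.sqrt_le_sqrt step3
    rwa [show (4:ℝ) * V = 2 ^ 2 * V by ring, Real.sqrt_mul (sq_nonneg 2),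
      Real.sqrt_sq (by norm_num : (0:ℝ) ≤ 2)] at this
  have hsq2 : Real.sqrt (∑ j : Fin k, D j ^ 2) ≤ ‖ξ - η‖ * Real.sqrt Ia := by
    have := Real.sqrt_le_sqrt step4
    rwa [Real.sqrt_mul (sq_nonneg _), Real.sqrt_sq (norm_nonneg _)] at this
  have hfinal : |(∑ j : Fin k, S1 j ^ 2) - ∑ j : Fin k, S2 j ^ 2|
      ≤ 2 * Real.sqrt (V * Ia) * ‖ξ - η‖ := by
    have h := step1.trans (step2.trans (mul_le_mul hsq1 hsq2
      (Real.sqrt_nonneg _) (by positivity)))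
    rw [Real.sqrt_mul hVnn]
    calc |(∑ j : Fin k, S1 j ^ 2) - ∑ j : Fin k, S2 j ^ 2|
        ≤ 2 * Real.sqrt V * (‖ξ - η‖ * Real.sqrt Ia) := h
      _ = 2 * (Real.sqrt V * Real.sqrt Ia) * ‖ξ - η‖ := by ring
  -- translate back
  have hrw1 : ∀ j : Fin k,
      ‖∫ x in Ω, u j x * Complex.exp (Complex.I * ((inner ℝ x ξ : ℝ) : ℂ))‖ = S1 j :=
    fun j => hFG j ξ
  have hrw2 : ∀ j : Fin k,
      ‖∫ x in Ω, u j x * Complex.exp (Complex.I * ((inner ℝ x η : ℝ) : ℂ))‖ = S2 j :=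
    fun j => hFG j η
  simp only [hrw1, hrw2]
  exact hfinal

theorem stmt_16 (n k : ℕ) (Ω : Set (EuclideanSpace ℝ (Fin n)))
    (hΩb : Bornology.IsBounded Ω) (hΩm : MeasurableSet Ω)
    (u : Fin k → EuclideanSpace ℝ (Fin n) → ℂ)
    (hint : ∀ j, IntegrableOn (u j) Ω)
    (horth : ∀ i j, ∫ x in Ω, (starRingEnd ℂ) (u i x) * u j x = if i = j then 1 else 0)
    (h : EuclideanSpace ℝ (Fin n) → ℝ)
    (hh : h = fun ξ => ∑ j : Fin k,
        ‖(((2 * Real.pi) ^ (-(n : ℝ) / 2) : ℝ) : ℂ) *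
            ∫ x in Ω, u j x * Complex.exp (Complex.I * ((inner ℝ x ξ : ℝ) : ℂ))‖ ^ 2)
    (ξ : EuclideanSpace ℝ (Fin n)) :
    ‖fderiv ℝ h ξ‖
      ≤ 2 * (2 * Real.pi) ^ (-(n : ℝ)) *
          Real.sqrt ((volume Ω).toReal *
            ⨅ a : EuclideanSpace ℝ (Fin n), ∫ x in Ω, ‖x - a‖ ^ 2) := by
  classical
  have h2pi : (0:ℝ) < 2 * Real.pi := by positivity
  set c : ℝ := (2 * Real.pi) ^ (-(n : ℝ) / 2) with hc
  have hcpos : 0 < c := Real.rpow_pos_of_pos h2pi _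
  have hc2 : c ^ 2 = (2 * Real.pi) ^ (-(n : ℝ)) := by
    rw [hc, ← Real.rpow_natCast ((2 * Real.pi) ^ (-(n:ℝ) / 2)) 2, ← Real.rpow_mul h2pi.le]
    norm_num
  set V : ℝ := (volume Ω).toReal with hV
  have hVnn : 0 ≤ V := ENNReal.toReal_nonneg
  set I : EuclideanSpace ℝ (Fin n) → ℝ := fun a => ∫ x in Ω, ‖x - a‖ ^ 2 with hI
  have hInn : ∀ a, 0 ≤ I a := fun a => integral_nonneg fun x => sq_nonneg _
  have hbdd : BddBelow (Set.range I) := ⟨0, by rintro _ ⟨a, rfl⟩; exact hInn a⟩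
  set I0 : ℝ := ⨅ a, I a with hI0
  have hI0nn : 0 ≤ I0 := le_ciInf hInn
  set K : ℝ := 2 * (2 * Real.pi) ^ (-(n : ℝ)) * Real.sqrt (V * I0) with hK
  have hKnn : 0 ≤ K := by
    have : (0:ℝ) ≤ (2 * Real.pi) ^ (-(n : ℝ)) := Real.rpow_nonneg h2pi.le _
    positivity
  have hS : ∀ ζ, h ζ = c ^ 2 *
      ∑ j : Fin k, ‖∫ x in Ω, u j x * Complex.exp (Complex.I * ((inner ℝ x ζ : ℝ) : ℂ))‖ ^ 2 := by
    intro ζ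
    rw [hh]
    simp only
    rw [Finset.mul_sum]
    refine Finset.sum_congr rfl fun j _ => ?_
    rw [norm_mul, mul_pow]
    congr 1
    rw [Complex.norm_real, Real.norm_eq_abs, sq_abs]
  have hlip : LipschitzWith K.toNNReal h := by
    refine LipschitzWith.of_dist_le_mul fun ζ₁ ζ₂ => ?_
    rw [Real.coe_toNNReal _ hKnn, Real.dist_eq, hS ζ₁, hS ζ₂, ← mul_sub, abs_mul,
      abs_of_nonneg (sq_nonneg c), dist_eq_norm]
    set d : ℝ := ‖ζ₁ - ζ₂‖ with hd
    have hdnn : 0 ≤ d := norm_nonneg _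
    set S : ℝ := |(∑ j : Fin k, ‖∫ x in Ω, u j x *
        Complex.exp (Complex.I * ((inner ℝ x ζ₁ : ℝ) : ℂ))‖ ^ 2) -
      ∑ j : Fin k, ‖∫ x in Ω, u j x *
        Complex.exp (Complex.I * ((inner ℝ x ζ₂ : ℝ) : ℂ))‖ ^ 2| with hSdef
    have key : ∀ a, S ≤ 2 * Real.sqrt (V * I a) * d := fun a =>
      aux_key Ω hΩb hΩm u hint horth a ζ₁ ζ₂
    set f : ℝ → ℝ := fun t => c ^ 2 * (2 * Real.sqrt (V * t) * d) with hf
    have hmono : Monotone f := by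
      intro s t hst
      simp only [hf]
      gcongr
    have hcont : ContinuousAt f I0 := by
      have c1 : Continuous fun t : ℝ => Real.sqrt (V * t) :=
        (continuous_const.mul continuous_id).sqrt
      have : Continuous f := continuous_const.mul ((continuous_const.mul c1).mul continuous_const)
      exact this.continuousAt
    have hmap : f I0 = ⨅ a, f (I a) := hmono.map_ciInf_of_continuousAt hcont hbdd
    have hle : c ^ 2 * S ≤ f I0 := by
      rw [hmap]
      refine le_ciInf fun a => ?_
      exact mul_le_mul_of_nonneg_left (key a) (sq_nonneg c)
    calc c ^ 2 * S ≤ f I0 := hle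
      _ = K * d := by rw [hf, hK, hc2]; ring
  calc ‖fderiv ℝ h ξ‖ ≤ (K.toNNReal : ℝ) := norm_fderiv_le_of_lipschitz ℝ hlip
    _ = K := Real.coe_toNNReal _ hKnn
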